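/- The acyclic reduction Ac(M) of a finite Markov chain M is acyclic: every nontrivial cycle in Ac(M) is at an absorbing state, i.e., if s₀'s₁'…sₙ' is a path of Ac(M) with sᵢ' = sⱼ' for some i < j, then sᵢ' is absorbing in Ac(M). -/

import Mathlib

open scoped ENNReal Classical
open MeasureTheory

namespace CE

variable {S : Type}

/-- Positive-probability transition (edge of the underlying digraph). -/
def edge (P : S → S → ℝ≥0∞) (s t : S) : Prop := 0 < P s t

/-- Finite path of the Markov chain with transition function `P`, starting at `s`. -/
def IsFPath (P : S → S → ℝ≥0∞) (s : S) (σ : List S) : Prop :=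
  σ.head? = some s ∧ σ.Chain' (edge P)

/-- Infinite path of the Markov chain with transition function `P`, starting at `s`. -/
def IsPath (P : S → S → ℝ≥0∞) (s : S) (ω : ℕ → S) : Prop :=
  ω 0 = s ∧ ∀ n, edge P (ω n) (ω (n + 1))

/-- Reachability in the underlying digraph. -/
def Reach (P : S → S → ℝ≥0∞) : S → S → Prop :=
  Relation.ReflTransGen (edge P)

/-- Same strongly connected component. -/
def sccRel (P : S → S → ℝ≥0∞) (s t : S) : Prop :=
  Reach P s t ∧ Reach P t s

/-- `s` belongs to a nontrivial SCC (more than one state, or a self-loop). -/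
def nontriv (P : S → S → ℝ≥0∞) (s : S) : Prop :=
  (∃ t, t ≠ s ∧ sccRel P s t) ∨ edge P s s

/-- Cylinder (cone) of a finite path. -/
def Cyl (ρ : List S) : Set (ℕ → S) := {ω | ∀ i : Fin ρ.length, ω i.1 = ρ.get i}

/-- Finite paths from `s` reaching `A` exactly at their last state. -/
def FReach (P : S → S → ℝ≥0∞) (s : S) (A : Set S) : Set (List S) :=
  {σ | IsFPath P s σ ∧ (∃ h : σ ≠ [], σ.getLast h ∈ A) ∧ ∀ x ∈ σ.dropLast, x ∉ A}

/-- Infinite sequences that eventually visit `A`. -/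
def ReachSet (A : Set S) : Set (ℕ → S) := {ω | ∃ i, ω i ∈ A}

/-- Product of transition probabilities along a finite path. -/
noncomputable def cylProb (P : S → S → ℝ≥0∞) (d : S) (ρ : List S) : ℝ≥0∞ :=
  ∏ i ∈ Finset.range (ρ.length - 1), P (ρ.getD i d) (ρ.getD (i + 1) d)

/-- `σ ⪯_f ω`: subsequence embedding satisfying freshness and inertia w.r.t. `r`. -/
structure Embeds (r : S → S → Prop) (σ : List S) (ω : ℕ → S) (f : ℕ → ℕ) : Prop where
  mono : ∀ i j, i < j → j < σ.length → f i < f j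
  agree : ∀ i : Fin σ.length, σ.get i = ω (f i.1)
  fresh : ∀ i < σ.length, ∀ j < f i, ¬ r (ω (f i)) (ω j)
  inertia : ∀ i, i + 1 < σ.length → ∀ j, f i < j → j < f (i + 1) → r (ω (f i)) (ω j)

/-- There is a path from `s` to `t` staying in the SCC of `s` until `t`. -/
def exitReach (P : S → S → ℝ≥0∞) (s t : S) : Prop :=
  ∃ l : List S, List.Chain (edge P) s (l ++ [t]) ∧ ∀ u ∈ s :: l, sccRel P s u

/-- The SCC of `s` has no output states. -/
def noOut (P : S → S → ℝ≥0∞) (s : S) : Prop :=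
  ∀ u t, sccRel P s u → edge P u t → sccRel P s t

/-- Edges of the acyclic reduction. -/
def AcEdge (P : S → S → ℝ≥0∞) (s t : S) : Prop :=
  (¬ nontriv P s ∧ edge P s t) ∨
  (nontriv P s ∧ ¬ sccRel P s t ∧ exitReach P s t) ∨
  (nontriv P s ∧ t = s ∧ noOut P s)

/-- States of the acyclic reduction: states outside nontrivial SCCs and input states. -/
def AcState (P : S → S → ℝ≥0∞) (s : S) : Prop :=
  ¬ nontriv P s ∨ ∃ t, ¬ sccRel P s t ∧ edge P t s

/-- A rail: a finite path of the acyclic reduction starting at `s0`. -/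
def IsRail (P : S → S → ℝ≥0∞) (s0 : S) (σ : List S) : Prop :=
  σ.head? = some s0 ∧ σ.Chain' (AcEdge P) ∧ ∀ x ∈ σ, AcState P x

/-- The torrent of a rail `σ`: infinite paths into which `σ` embeds. -/
def Torr (P : S → S → ℝ≥0∞) (r : S → S → Prop) (s0 : S) (σ : List S) : Set (ℕ → S) :=
  {ω | IsPath P s0 ω ∧ ∃ f, Embeds r σ ω f}

def toSeq (d : S) (ρ : List S) : ℕ → S := fun n => ρ.getD n d

/-- Torrent generators: finite paths `ρ` with an embedding of `σ` ending at the last state. -/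
def Gen (P : S → S → ℝ≥0∞) (r : S → S → Prop) (s0 : S) (σ : List S) : Set (List S) :=
  {ρ | IsFPath P s0 ρ ∧ ρ ≠ [] ∧ ∃ f, Embeds r σ (toSeq s0 ρ) f ∧
    (∀ i < σ.length, f i < ρ.length) ∧ f (σ.length - 1) = ρ.length - 1}

/-- Finite paths from `t` to `s` staying in the SCC of `t` except the final state `s`. -/
def ExitPaths (P : S → S → ℝ≥0∞) (t s : S) : Set (List S) :=
  {π | π.head? = some t ∧ (∃ h : π ≠ [], π.getLast h = s) ∧ π.Chain' (edge P) ∧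
    ∀ u ∈ π.dropLast, sccRel P t u}

/-- `M_ψ`: make absorbing all states of `A` and all states not reaching `A`. -/
noncomputable def absP (P : S → S → ℝ≥0∞) (A : Set S) : S → S → ℝ≥0∞ := fun s t =>
  if s ∈ A ∨ ¬ ∃ a ∈ A, Reach P s a then (if t = s then 1 else 0) else P s t

/-- Absorbing state. -/
def Absorbing (P : S → S → ℝ≥0∞) (s : S) : Prop :=
  P s s = 1 ∧ ∀ t, t ≠ s → P s t = 0

/-- Output states of the SCC of `k`. -/
def OutK (P : S → S → ℝ≥0∞) (k : S) : Set S :=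
  {t | ¬ sccRel P k t ∧ ∃ u, sccRel P k u ∧ edge P u t}

/-- The chain `M_K` of the SCC of `k`, with the output states made absorbing. -/
noncomputable def PK (P : S → S → ℝ≥0∞) (k : S) : S → S → ℝ≥0∞ := fun s t =>
  if sccRel P k s then P s t else (if t = s then 1 else 0)

/-- Absorbing state of the acyclic reduction: its only edge is a self-loop. -/
def AcAbsorbing (P : S → S → ℝ≥0∞) (s : S) : Prop :=
  AcEdge P s s ∧ ∀ t, AcEdge P s t → t = s


lemma exists_last_edge (P : S → S → ℝ≥0∞) :
    ∀ (L : List S) (s t : S), List.Chain (edge P) s (L ++ [t]) →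
      ∃ u, u ∈ s :: L ∧ edge P u t := by
  intro L
  induction L with
  | nil => intro s t h; exact ⟨s, List.mem_cons_self, (List.chain_cons.mp h).1⟩
  | cons a L ih =>
      intro s t h
      rw [List.cons_append] at h; unfold List.Chain at h; rw [List.chain_cons] at h
      obtain ⟨u, hu, he⟩ := ih a t h.2
      exact ⟨u, List.mem_cons_of_mem _ hu, he⟩

lemma reach_of_exitReach (P : S → S → ℝ≥0∞) {s t : S} (h : exitReach P s t) :
    Reach P s t := by
  obtain ⟨L, hch, -⟩ := h
  have := List.relationReflTransGen_of_exists_isChain_cons (l := L ++ [t]) (r := edge P)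
    (a := s) (b := t) hch (by simp)
  exact this

lemma reach_of_acEdge (P : S → S → ℝ≥0∞) {s t : S} (h : AcEdge P s t) :
    Reach P s t := by
  rcases h with ⟨-, he⟩ | ⟨-, -, hex⟩ | ⟨-, rfl, -⟩
  · exact Relation.ReflTransGen.single he
  · exact reach_of_exitReach P hex
  · exact Relation.ReflTransGen.refl

lemma chain'_rtg {r : S → S → Prop} (l : List S) (h : l.Chain' r) :
    ∀ (j : ℕ) (hj : j < l.length) (i : ℕ) (hij : i ≤ j),
      Relation.ReflTransGen r (l.get ⟨i, lt_of_le_of_lt hij hj⟩) (l.get ⟨j, hj⟩) := by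
  intro j
  induction j with
  | zero =>
      intro hj i hij
      have : i = 0 := Nat.le_zero.mp hij
      subst this; exact Relation.ReflTransGen.refl
  | succ k ih =>
      intro hj i hij
      rcases Nat.lt_or_ge i (k + 1) with hlt | hge
      · have hk : k < l.length := lt_trans (Nat.lt_succ_self k) hj
        have step : r (l.get ⟨k, hk⟩) (l.get ⟨k + 1, hj⟩) :=
          by simpa using List.isChain_iff_getElem.mp h k (by omega)
        exact (ih hk i (Nat.lt_succ_iff.mp hlt)).tail step
      · have : i = k + 1 := le_antisymm hij hge
        subst this; exact Relation.ReflTransGen.refl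

lemma reach_of_rtg_acEdge (P : S → S → ℝ≥0∞) {s t : S}
    (h : Relation.ReflTransGen (AcEdge P) s t) : Reach P s t := by
  induction h with
  | refl => exact Relation.ReflTransGen.refl
  | tail _ hbc ih => exact ih.trans (reach_of_acEdge P hbc)

/-- the acyclic reduction is acyclic: any repetition of a state along a
path of `Ac(M)` happens at an absorbing state of `Ac(M)`. -/
theorem ac_acyclic (P : S → S → ℝ≥0∞) (l : List S)
    (hchain : l.Chain' (AcEdge P)) (hstates : ∀ x ∈ l, AcState P x)
    (i j : Fin l.length) (hij : i < j) (heq : l.get i = l.get j) :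
    AcAbsorbing P (l.get i) := by
  set s := l.get i with hs
  have hi1 : i.1 + 1 < l.length := lt_of_le_of_lt hij j.2
  set u := l.get ⟨i.1 + 1, hi1⟩ with hu
  -- first edge of the cycle
  have hedge : AcEdge P s u := by simpa [hs, hu] using List.isChain_iff_getElem.mp hchain i.1 (by omega)
  -- reach back from u to s through the chain
  have hback : Reach P u s := by
    have h1 : Relation.ReflTransGen (AcEdge P) u (l.get j) := by
      have := chain'_rtg l hchain j.1 j.2 (i.1 + 1) hij
      simpa [hu] using this
    rw [heq]
    exact reach_of_rtg_acEdge P h1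
  have hscc : u ≠ s → sccRel P s u := fun hne =>
    ⟨reach_of_acEdge P hedge, hback⟩
  rcases hedge with ⟨hnt, he⟩ | ⟨hnt, hns, hex⟩ | ⟨hnt, hus, hno⟩
  · -- impossible: s would be nontrivial
    exfalso
    by_cases hne : u = s
    · exact hnt (Or.inr (hne ▸ he))
    · exact hnt (Or.inl ⟨u, hne, hscc hne⟩)
  · exact absurd ⟨reach_of_exitReach P hex, hback⟩ hns
  · constructor
    · exact Or.inr (Or.inr ⟨hnt, rfl, hno⟩)
    · intro t ht
      rcases ht with ⟨h1, -⟩ | ⟨-, hns, L, hch, hall⟩ | ⟨-, hts, -⟩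
      · exact absurd hnt h1
      · exfalso
        obtain ⟨v, hv, hev⟩ := exists_last_edge P L s t hch
        exact hns (hno v t (hall v hv) hev)
      · exact hts

end CE
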